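/- No solution can return with opposite-signed slopes to a previously attained value: if w is a solution with parameters (w₀,γ), then there do not exist 0 ≤ x₁ < x₂ with w(x₁) = w(x₂), w′(x₁) ≤ 0 and w′(x₂) ≥ 0. Consequently, w has no local minimizer in (0,∞) and is not constant on any nondegenerate subinterval of [0,∞). -/

import Mathlib

open Set MeasureTheory Filter Topology

/-- `piU U c w = min_{μ ∈ U} (μ·w + c(μ))`, realized as an infimum. -/
noncomputable def piU (U : Set ℝ) (c : ℝ → ℝ) (w : ℝ) : ℝ :=
  sInf ((fun μ => μ * w + c μ) '' U)

/-- `w` is a continuously differentiable solution on `[0,∞)` of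
`(σ²/2)·w′(x) + π(w(x)) + h(x) = γ` with `w(0) = w₀`, with derivative `w'`. -/
def IsSolution (σ : ℝ) (U : Set ℝ) (c h : ℝ → ℝ) (w₀ γ : ℝ) (w w' : ℝ → ℝ) : Prop :=
  w 0 = w₀ ∧ ContinuousOn w' (Set.Ici 0) ∧
  (∀ x ∈ Set.Ici (0:ℝ), HasDerivWithinAt w (w' x) (Set.Ici 0) x) ∧
  (∀ x ∈ Set.Ici (0:ℝ), σ ^ 2 / 2 * w' x + piU U c (w x) + h x = γ)

theorem stmt_9 (σ : ℝ) (hσ : 0 < σ) (U : Set ℝ) (hUne : U.Nonempty) (hUcpt : IsCompact U)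
    (c : ℝ → ℝ) (hc : Continuous c) (h : ℝ → ℝ)
    (hhcont : ContinuousOn h (Set.Ici 0)) (hhmono : StrictMonoOn h (Set.Ici 0))
    (hh0 : h 0 = 0) (hhtop : Filter.Tendsto h Filter.atTop Filter.atTop)
    (w₀ γ : ℝ) (w w' : ℝ → ℝ) (hw : IsSolution σ U c h w₀ γ w w') :
    (¬ ∃ x₁ x₂ : ℝ, 0 ≤ x₁ ∧ x₁ < x₂ ∧ w x₁ = w x₂ ∧ w' x₁ ≤ 0 ∧ 0 ≤ w' x₂) ∧
    (¬ ∃ x : ℝ, 0 < x ∧ IsLocalMinOn w (Set.Ioi 0) x) ∧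
    (¬ ∃ x₁ x₂ : ℝ, 0 ≤ x₁ ∧ x₁ < x₂ ∧ ∀ y ∈ Set.Icc x₁ x₂, w y = w x₁) := by
  obtain ⟨hw0, hw'cont, hderiv, hode⟩ := hw
  have hσ2 : 0 < σ ^ 2 / 2 := by positivity
  have hcont : ContinuousOn w (Set.Ici 0) := fun y hy => (hderiv y hy).continuousWithinAt
  -- Key lemma: returning to a value strictly decreases the slope.
  have key : ∀ x₁ x₂ : ℝ, 0 ≤ x₁ → x₁ < x₂ → w x₁ = w x₂ → w' x₂ < w' x₁ := by
    intro x₁ x₂ h1 h12 heq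
    have h2 : (0:ℝ) ≤ x₂ := le_trans h1 h12.le
    have e1 := hode x₁ h1
    have e2 := hode x₂ h2
    have hh : h x₁ < h x₂ := hhmono h1 h2 h12
    rw [heq] at e1
    nlinarith [e1, e2, hh]
  have hDA : ∀ y : ℝ, 0 < y → HasDerivAt w (w' y) y := fun y hy =>
    (hderiv y hy.le).hasDerivAt (Ici_mem_nhds hy)
  have part1 : ¬ ∃ x₁ x₂ : ℝ, 0 ≤ x₁ ∧ x₁ < x₂ ∧ w x₁ = w x₂ ∧ w' x₁ ≤ 0 ∧ 0 ≤ w' x₂ := by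
    rintro ⟨x₁, x₂, h1, h12, heq, hd1, hd2⟩
    have := key x₁ x₂ h1 h12 heq
    linarith
  refine ⟨part1, ?_, ?_⟩
  · -- no local minimizer in (0, ∞)
    rintro ⟨x, hx, hmin⟩
    rw [IsLocalMinOn, IsMinFilter] at hmin
    obtain ⟨ε, hε, hball⟩ := Metric.mem_nhdsWithin_iff.1 hmin
    set δ : ℝ := min (ε / 2) (x / 2) with hδdef
    have hδ : 0 < δ := lt_min (by linarith) (by linarith)
    have hδx : δ < x := lt_of_le_of_lt (min_le_right _ _) (by linarith)
    have hδε : δ < ε := lt_of_le_of_lt (min_le_left _ _) (by linarith)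
    have hlow : ∀ z ∈ Set.Icc (x - δ) (x + δ), w x ≤ w z := by
      intro z hz
      have hz0 : 0 < z := by
        have := hz.1; linarith
      have : z ∈ Metric.ball x ε ∩ Set.Ioi 0 := by
        constructor
        · rw [Metric.mem_ball, Real.dist_eq, abs_lt]
          constructor <;> [linarith [hz.1]; linarith [hz.2]]
        · exact hz0
      exact hball this
    set a : ℝ := x - δ / 2 with hadef
    set b : ℝ := x + δ / 2 with hbdef
    have ha0 : 0 < a := by simp only [hadef]; linarith
    have hax : a < x := by simp only [hadef]; linarith
    have hxb : x < b := by simp only [hbdef]; linarith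
    have hsub : Set.Icc a b ⊆ Set.Icc (x - δ) (x + δ) := by
      apply Set.Icc_subset_Icc <;> simp only [hadef, hbdef] <;> linarith
    have hIci : Set.Icc a b ⊆ Set.Ici (0:ℝ) := fun z hz => le_trans ha0.le hz.1
    by_cases hA : ∃ y ∈ Set.Icc a b, y ≠ x ∧ w y = w x
    · obtain ⟨y, hy, hyne, hyeq⟩ := hA
      have hy0 : 0 < y := lt_of_lt_of_le ha0 hy.1
      -- y is a genuine local min
      have hminy : IsLocalMin w y := by
        have hmem : Set.Ioo (x - δ) (x + δ) ∈ 𝓝 y := by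
          apply Ioo_mem_nhds
          · have := hy.1; simp only [hadef] at this; linarith
          · have := hy.2; simp only [hbdef] at this; linarith
        filter_upwards [hmem] with z hz
        rw [hyeq]
        exact hlow z ⟨hz.1.le, hz.2.le⟩
      have hminx : IsLocalMin w x := by
        have hmem : Set.Ioo (x - δ) (x + δ) ∈ 𝓝 x := Ioo_mem_nhds (by linarith) (by linarith)
        filter_upwards [hmem] with z hz
        exact hlow z ⟨hz.1.le, hz.2.le⟩
      have hdy : w' y = 0 := hminy.hasDerivAt_eq_zero (hDA y hy0)
      have hdx : w' x = 0 := hminx.hasDerivAt_eq_zero (hDA x hx)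
      rcases lt_or_gt_of_ne hyne with hlt | hgt
      · have := key y x hy0.le hlt hyeq
        rw [hdy, hdx] at this; exact lt_irrefl 0 this
      · have := key x y hx.le hgt hyeq.symm
        rw [hdy, hdx] at this; exact lt_irrefl 0 this
    · push_neg at hA
      have hstrict : ∀ y ∈ Set.Icc a b, y ≠ x → w x < w y := by
        intro y hy hyne
        exact lt_of_le_of_ne (hlow y (hsub hy)) (fun hE => hA y hy hyne hE.symm)
      have hwa : w x < w a := hstrict a ⟨le_refl a, by linarith⟩ (ne_of_lt hax)
      have hwb : w x < w b := hstrict b ⟨by linarith, le_refl b⟩ (ne_of_gt hxb)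
      set v : ℝ := min (w a) (w b) with hvdef
      have hvx : w x < v := lt_min hwa hwb
      have hcont1 : ContinuousOn w (Set.Icc a x) :=
        hcont.mono (fun z hz => le_trans ha0.le hz.1)
      have hcont2 : ContinuousOn w (Set.Icc x b) :=
        hcont.mono (fun z hz => le_trans hx.le hz.1)
      -- find crossings of level v on both sides
      have hS1ne : ∃ y ∈ Set.Icc a x, w y = v := by
        have : v ∈ Set.Icc (w x) (w a) := ⟨hvx.le, min_le_left _ _⟩
        obtain ⟨y, hy, hyv⟩ := intermediate_value_Icc' hax.le hcont1 this
        exact ⟨y, hy, hyv⟩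
      have hS2ne : ∃ y ∈ Set.Icc x b, w y = v := by
        have : v ∈ Set.Icc (w x) (w b) := ⟨hvx.le, min_le_right _ _⟩
        obtain ⟨y, hy, hyv⟩ := intermediate_value_Icc hxb.le hcont2 this
        exact ⟨y, hy, hyv⟩
      set S₁ : Set ℝ := Set.Icc a x ∩ w ⁻¹' {v} with hS1def
      set S₂ : Set ℝ := Set.Icc x b ∩ w ⁻¹' {v} with hS2def
      have hS1closed : IsClosed S₁ :=
        hcont1.preimage_isClosed_of_isClosed isClosed_Icc isClosed_singleton
      have hS2closed : IsClosed S₂ :=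
        hcont2.preimage_isClosed_of_isClosed isClosed_Icc isClosed_singleton
      have hS1cpt : IsCompact S₁ :=
        isCompact_Icc.of_isClosed_subset hS1closed (Set.inter_subset_left)
      have hS2cpt : IsCompact S₂ :=
        isCompact_Icc.of_isClosed_subset hS2closed (Set.inter_subset_left)
      have hS1nonempty : S₁.Nonempty := by
        obtain ⟨y, hy, hyv⟩ := hS1ne; exact ⟨y, hy, hyv⟩
      have hS2nonempty : S₂.Nonempty := by
        obtain ⟨y, hy, hyv⟩ := hS2ne; exact ⟨y, hy, hyv⟩
      set y₁ : ℝ := sSup S₁ with hy1def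
      set y₂ : ℝ := sInf S₂ with hy2def
      have hy1mem : y₁ ∈ S₁ := hS1cpt.sSup_mem hS1nonempty
      have hy2mem : y₂ ∈ S₂ := hS2cpt.sInf_mem hS2nonempty
      have hy1v : w y₁ = v := hy1mem.2
      have hy2v : w y₂ = v := hy2mem.2
      have hy1x : y₁ < x := lt_of_le_of_ne hy1mem.1.2 (fun hE => by
        rw [hE] at hy1v; exact (ne_of_lt hvx) hy1v)
      have hxy2 : x < y₂ := lt_of_le_of_ne hy2mem.1.1 (fun hE => by
        rw [← hE] at hy2v; exact (ne_of_lt hvx) hy2v)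
      have hy1a : a ≤ y₁ := hy1mem.1.1
      have hy10 : 0 < y₁ := lt_of_lt_of_le ha0 hy1a
      -- w ≤ v on [y₁, x]
      have hmax1 : ∀ z ∈ Set.Icc y₁ x, w z ≤ v := by
        intro z hz
        rcases eq_or_lt_of_le hz.1 with hE | hlt
        · rw [← hE, hy1v]
        by_contra hgt
        push_neg at hgt
        have : v ∈ Set.Icc (w x) (w z) := ⟨hvx.le, hgt.le⟩
        obtain ⟨y', hy', hy'v⟩ := intermediate_value_Icc' hz.2
          (hcont1.mono (Set.Icc_subset_Icc (le_trans hy1a hz.1) (le_refl x))) this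
        have : y' ∈ S₁ := ⟨⟨le_trans hy1a (le_trans hz.1 hy'.1), hy'.2⟩, hy'v⟩
        have hle : y' ≤ y₁ := le_csSup hS1cpt.bddAbove this
        linarith [hy'.1]
      -- w ≤ v on [x, y₂]
      have hmax2 : ∀ z ∈ Set.Icc x y₂, w z ≤ v := by
        intro z hz
        rcases eq_or_lt_of_le hz.2 with hE | hlt
        · rw [hE, hy2v]
        by_contra hgt
        push_neg at hgt
        have : v ∈ Set.Icc (w x) (w z) := ⟨hvx.le, hgt.le⟩
        obtain ⟨y', hy', hy'v⟩ := intermediate_value_Icc hz.1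
          (hcont2.mono (Set.Icc_subset_Icc (le_refl x) (le_trans hz.2 hy2mem.1.2))) this
        have : y' ∈ S₂ := ⟨⟨hy'.1, le_trans hy'.2 (le_trans hz.2 hy2mem.1.2)⟩, hy'v⟩
        have hle : y₂ ≤ y' := csInf_le hS2cpt.bddBelow this
        linarith [hy'.2]
      -- derivative signs at y₁ and y₂
      have hd1 : w' y₁ ≤ 0 := by
        have hmaxOn : IsLocalMaxOn w (Set.Icc y₁ x) y₁ := by
          apply Filter.eventually_of_mem self_mem_nhdsWithin
          intro z hz
          rw [hy1v]
          exact hmax1 z hz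
        have hder : HasDerivWithinAt w (w' y₁) (Set.Icc y₁ x) y₁ :=
          (hderiv y₁ hy10.le).mono (fun z hz => le_trans hy10.le hz.1)
        have htang : x - y₁ ∈ posTangentConeAt (Set.Icc y₁ x) y₁ := by
          apply sub_mem_posTangentConeAt_of_segment_subset
          rw [segment_eq_Icc hy1x.le]
        have := hmaxOn.hasFDerivWithinAt_nonpos hder.hasFDerivWithinAt htang
        simp only [ContinuousLinearMap.smulRight_apply, ContinuousLinearMap.one_apply, ContinuousLinearMap.toSpanSingleton_apply,
          smul_eq_mul] at this
        nlinarith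
      have hd2 : 0 ≤ w' y₂ := by
        have hmaxOn : IsLocalMaxOn w (Set.Icc x y₂) y₂ := by
          apply Filter.eventually_of_mem self_mem_nhdsWithin
          intro z hz
          rw [hy2v]
          exact hmax2 z hz
        have hder : HasDerivWithinAt w (w' y₂) (Set.Icc x y₂) y₂ :=
          (hderiv y₂ (le_trans hx.le hxy2.le)).mono (fun z hz => le_trans hx.le hz.1)
        have htang : x - y₂ ∈ posTangentConeAt (Set.Icc x y₂) y₂ := by
          apply sub_mem_posTangentConeAt_of_segment_subset
          rw [segment_symm, segment_eq_Icc hxy2.le]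
        have := hmaxOn.hasFDerivWithinAt_nonpos hder.hasFDerivWithinAt htang
        simp only [ContinuousLinearMap.smulRight_apply, ContinuousLinearMap.one_apply, ContinuousLinearMap.toSpanSingleton_apply,
          smul_eq_mul] at this
        nlinarith
      have heq12 : w y₁ = w y₂ := by rw [hy1v, hy2v]
      have := key y₁ y₂ hy10.le (lt_trans hy1x hxy2) heq12
      linarith
  · -- not constant on any nondegenerate subinterval
    rintro ⟨x₁, x₂, h1, h12, hconst⟩
    set y₁ : ℝ := x₁ + (x₂ - x₁) / 3 with hy1def
    set y₂ : ℝ := x₁ + 2 * (x₂ - x₁) / 3 with hy2def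
    have hy1mem : y₁ ∈ Set.Icc x₁ x₂ := ⟨by simp only [hy1def]; linarith, by simp only [hy1def]; linarith⟩
    have hy2mem : y₂ ∈ Set.Icc x₁ x₂ := ⟨by simp only [hy2def]; linarith, by simp only [hy2def]; linarith⟩
    have hzero : ∀ y, x₁ < y → y < x₂ → w' y = 0 := by
      intro y hy1 hy2
      have hy0 : 0 < y := lt_of_le_of_lt h1 hy1
      have hEq : w =ᶠ[𝓝 y] fun _ => w x₁ := by
        filter_upwards [Ioo_mem_nhds hy1 hy2] with z hz
        exact hconst z ⟨hz.1.le, hz.2.le⟩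
      have h0 : HasDerivAt w 0 y :=
        (hasDerivAt_const y (w x₁)).congr_of_eventuallyEq hEq
      exact (hDA y hy0).unique h0
    have hz1 : w' y₁ = 0 := hzero y₁ (by simp only [hy1def]; linarith) (by simp only [hy1def]; linarith)
    have hz2 : w' y₂ = 0 := hzero y₂ (by simp only [hy2def]; linarith) (by simp only [hy2def]; linarith)
    have heq : w y₁ = w y₂ := by rw [hconst y₁ hy1mem, hconst y₂ hy2mem]
    have hy10 : 0 ≤ y₁ := by simp only [hy1def]; linarith
    have hlt : y₁ < y₂ := by simp only [hy1def, hy2def]; linarith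
    have := key y₁ y₂ hy10 hlt heq
    rw [hz1, hz2] at this
    exact lt_irrefl 0 this
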